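/- Let a = (n+q)/2 and b = n−q with 0 < q ≤ n. The unique solution φ of φ'(t) = q·coth(R − φ(t)) + ((n−q)/2)·coth((R − φ(t))/2), φ(0) = 0, with values in [0,R), satisfies e^{R−φ(t)} / (a·(e^{2(R−φ(t))} + 1) + b·e^{R−φ(t)}) = e^{a t}·e^{R}/(a·(e^{2R}+1)+b·e^{R}), and the collapsing time is T = (1/a)·log((a·(e^{2R}+1)+b·e^{R})/(2n·e^{R})). -/

import Mathlib

open Real Filter

lemma key_id' (n q u : ℝ) (hu : 0 < u) :
    (q * (Real.cosh u / Real.sinh u) +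
      ((n - q) / 2) * (Real.cosh (u / 2) / Real.sinh (u / 2))) * (Real.exp (2*u) - 1) =
    ((n+q)/2) * (Real.exp (2*u) + 1) + (n - q) * Real.exp u := by
  have hx0 : (0:ℝ) < Real.exp (u/2) := Real.exp_pos _
  set x := Real.exp (u/2) with hx
  have hx1 : 1 < x := by rw [hx, ← Real.exp_zero]; exact Real.exp_lt_exp.2 (by linarith)
  have hxne : x ≠ 0 := by positivity
  have heu : Real.exp u = x ^ 2 := by rw [hx, sq, ← Real.exp_add]; congr 1; ring
  have heu2 : Real.exp (2*u) = x ^ 4 := by rw [two_mul, Real.exp_add, heu]; ring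
  have hmu2 : Real.exp (-(u/2)) = 1 / x := by rw [Real.exp_neg, ← hx, one_div]
  have hmu : Real.exp (-u) = 1 / x ^ 2 := by rw [Real.exp_neg, heu, one_div]
  have hx2 : 1 < x ^ 2 := by nlinarith
  have hx4 : 1 < x ^ 4 := by nlinarith
  have hd1 : x ^ 4 - 1 ≠ 0 := by intro h; nlinarith
  have hd2 : x ^ 2 - 1 ≠ 0 := by intro h; nlinarith
  have hxp2 : (0:ℝ) < x ^ 2 := by positivity
  have hc1 : Real.cosh u / Real.sinh u = (x ^ 4 + 1) / (x ^ 4 - 1) := by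
    have h1 : (x^2 - 1/x^2)/2 ≠ 0 := by
      have : 1/x^2 < x^2 := by rw [div_lt_iff₀ hxp2]; nlinarith
      intro h; nlinarith
    rw [Real.cosh_eq, Real.sinh_eq, heu, hmu, div_eq_div_iff h1 hd1]
    field_simp
  have hc2 : Real.cosh (u/2) / Real.sinh (u/2) = (x ^ 2 + 1) / (x ^ 2 - 1) := by
    have h1 : (x - 1/x)/2 ≠ 0 := by
      have : 1/x < x := by rw [div_lt_iff₀ hx0]; nlinarith
      intro h; nlinarith
    rw [Real.cosh_eq, Real.sinh_eq, ← hx, hmu2, div_eq_div_iff h1 hd2]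
    field_simp
  rw [hc1, hc2, heu2, heu]
  field_simp; ring

/-- With `a = (n+q)/2`, `b = n − q`, the solution of
`φ' = q·coth(R − φ) + ((n−q)/2)·coth((R − φ)/2)`, `φ(0) = 0`, values in `[0,R)`, satisfies
`e^{R−φ(t)}/(a(e^{2(R−φ(t))}+1)+b·e^{R−φ(t)}) = e^{at}·e^R/(a(e^{2R}+1)+b·e^R)`, and the
collapsing time is `T = (1/a)·log((a(e^{2R}+1)+b·e^R)/(2n·e^R))`. -/
theorem stmt_11 (n q R T : ℝ) (hn : 1 ≤ n) (hq : 0 < q) (hqn : q ≤ n)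
    (hR : 0 < R) (hT : 0 < T)
    (a b : ℝ) (ha : a = (n + q) / 2) (hb : b = n - q)
    (φ : ℝ → ℝ) (h0 : φ 0 = 0)
    (hrange : ∀ t ∈ Set.Ico (0 : ℝ) T, φ t ∈ Set.Ico (0 : ℝ) R)
    (hode : ∀ t ∈ Set.Ico (0 : ℝ) T,
      HasDerivAt φ
        (q * (Real.cosh (R - φ t) / Real.sinh (R - φ t)) +
          ((n - q) / 2) * (Real.cosh ((R - φ t) / 2) / Real.sinh ((R - φ t) / 2))) t) :
    (∀ t ∈ Set.Ico (0 : ℝ) T,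
        Real.exp (R - φ t) /
            (a * (Real.exp (2 * (R - φ t)) + 1) + b * Real.exp (R - φ t)) =
          Real.exp (a * t) * Real.exp R /
            (a * (Real.exp (2 * R) + 1) + b * Real.exp R)) ∧
      (Tendsto φ (nhdsWithin T (Set.Iio T)) (nhds R) →
        T = (1 / a) * Real.log
          ((a * (Real.exp (2 * R) + 1) + b * Real.exp R) / (2 * n * Real.exp R))) := by
  have hapos : 0 < a := by rw [ha]; linarith
  have hbnn : 0 ≤ b := by rw [hb]; linarith
  have hDpos : ∀ y : ℝ, 0 < a * (Real.exp (2 * y) + 1) + b * Real.exp y := by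
    intro y
    have h1 : 0 < a * (Real.exp (2 * y) + 1) := by positivity
    have h2 : 0 ≤ b * Real.exp y := by positivity
    linarith
  -- the function which is constant
  set g : ℝ → ℝ := fun s => Real.exp (-(a * s)) *
    (Real.exp (R - φ s) / (a * (Real.exp (2 * (R - φ s)) + 1) + b * Real.exp (R - φ s)))
    with hg
  have hgderiv : ∀ s ∈ Set.Ico (0 : ℝ) T, HasDerivAt g 0 s := by
    intro s hs
    obtain ⟨hs0, hsT⟩ := hs
    have hu : 0 < R - φ s := by have := hrange s ⟨hs0, hsT⟩; simp at this; linarith [this.2]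
    set pr := q * (Real.cosh (R - φ s) / Real.sinh (R - φ s)) +
        ((n - q) / 2) * (Real.cosh ((R - φ s) / 2) / Real.sinh ((R - φ s) / 2)) with hpr
    have hφ := hode s ⟨hs0, hsT⟩
    have h1 : HasDerivAt (fun s => R - φ s) (-pr) s := hφ.const_sub R
    have h2 : HasDerivAt (fun s => Real.exp (R - φ s)) (Real.exp (R - φ s) * (-pr)) s := h1.exp
    have h3 : HasDerivAt (fun s => Real.exp (2 * (R - φ s)))
        (Real.exp (2 * (R - φ s)) * (2 * (-pr))) s := (h1.const_mul 2).exp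
    have h4 : HasDerivAt (fun s => a * (Real.exp (2 * (R - φ s)) + 1) + b * Real.exp (R - φ s))
        (a * (Real.exp (2 * (R - φ s)) * (2 * (-pr))) + b * (Real.exp (R - φ s) * (-pr))) s :=
      ((h3.add_const 1).const_mul a).add (h2.const_mul b)
    have hDne : a * (Real.exp (2 * (R - φ s)) + 1) + b * Real.exp (R - φ s) ≠ 0 :=
      (hDpos _).ne'
    have h5 := h2.div h4 hDne
    have h6 : HasDerivAt (fun s => Real.exp (-(a * s))) (Real.exp (-(a * s)) * (-a)) s := by
      have : HasDerivAt (fun s : ℝ => -(a * s)) (-a) s := by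
        have h := ((hasDerivAt_id s).const_mul a).neg; rw [mul_one] at h; exact h
      exact this.exp
    have h7 := h6.mul h5
    -- show the derivative value is zero
    have hkey : pr * (Real.exp (2 * (R - φ s)) - 1) =
        a * (Real.exp (2 * (R - φ s)) + 1) + b * Real.exp (R - φ s) := by
      rw [hpr, ha, hb]; exact key_id' n q (R - φ s) hu
    have hzero : Real.exp (-(a * s)) * (-a) *
          (Real.exp (R - φ s) /
            (a * (Real.exp (2 * (R - φ s)) + 1) + b * Real.exp (R - φ s))) +
        Real.exp (-(a * s)) *
          ((Real.exp (R - φ s) * (-pr) *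
              (a * (Real.exp (2 * (R - φ s)) + 1) + b * Real.exp (R - φ s)) -
            Real.exp (R - φ s) *
              (a * (Real.exp (2 * (R - φ s)) * (2 * (-pr))) +
                b * (Real.exp (R - φ s) * (-pr)))) /
            (a * (Real.exp (2 * (R - φ s)) + 1) + b * Real.exp (R - φ s)) ^ 2) = 0 := by
      set P := Real.exp (-(a * s)) with hP
      set N := Real.exp (R - φ s) with hN
      set M := Real.exp (2 * (R - φ s)) with hM
      have hDne' : a * (M + 1) + b * N ≠ 0 := hDne
      clear_value P N M
      clear hP hN hM hpr hφ h1 h2 h3 h4 h6 hDne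
      clear_value pr
      field_simp
      rw [div_eq_zero_iff]; left; linear_combination (P * N * a) * hkey
    rw [← hzero]
    exact h7
  have hconst : ∀ t ∈ Set.Ico (0 : ℝ) T, g t = g 0 := by
    intro t ht
    obtain ⟨ht0, htT⟩ := ht
    have hsub : Set.Icc (0 : ℝ) t ⊆ Set.Ico (0 : ℝ) T := fun x hx =>
      ⟨hx.1, lt_of_le_of_lt hx.2 htT⟩
    have hcont : ContinuousOn g (Set.Icc 0 t) := fun x hx =>
      ((hgderiv x (hsub hx)).continuousAt).continuousWithinAt
    exact constant_of_has_deriv_right_zero hcont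
      (fun x hx => ((hgderiv x ⟨hx.1, lt_of_lt_of_le hx.2 (le_of_lt htT)⟩).hasDerivWithinAt))
      t (Set.right_mem_Icc.2 ht0)
  have hmain : ∀ t ∈ Set.Ico (0 : ℝ) T,
      Real.exp (R - φ t) /
          (a * (Real.exp (2 * (R - φ t)) + 1) + b * Real.exp (R - φ t)) =
        Real.exp (a * t) * Real.exp R /
          (a * (Real.exp (2 * R) + 1) + b * Real.exp R) := by
    intro t ht
    have h := hconst t ht
    rw [hg] at h
    simp only [h0, mul_zero, neg_zero, Real.exp_zero, one_mul, sub_zero] at h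
    have hP : Real.exp (-(a * t)) ≠ 0 := Real.exp_ne_zero _
    have hD1 : a * (Real.exp (2 * (R - φ t)) + 1) + b * Real.exp (R - φ t) ≠ 0 := (hDpos _).ne'
    have hD2 : a * (Real.exp (2 * R) + 1) + b * Real.exp R ≠ 0 := (hDpos _).ne'
    have hE : Real.exp (a * t) * Real.exp (-(a * t)) = 1 := by
      rw [← Real.exp_add]; simp
    field_simp at h ⊢
    linear_combination Real.exp (a*t) * h -
      (Real.exp (R - φ t) * (a * (Real.exp (R*2) + 1) + b * Real.exp R)) * hE
  refine ⟨hmain, ?_⟩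
  intro hlim
  -- limits
  have hne : (nhdsWithin T (Set.Iio T)).NeBot := nhdsLT_neBot T
  have hmem : Set.Ico (0 : ℝ) T ∈ nhdsWithin T (Set.Iio T) :=
    Filter.mem_of_superset (Ioo_mem_nhdsLT hT) (fun x hx => ⟨hx.1.le, hx.2⟩)
  have hlhs : Tendsto (fun t => Real.exp (R - φ t) /
      (a * (Real.exp (2 * (R - φ t)) + 1) + b * Real.exp (R - φ t)))
      (nhdsWithin T (Set.Iio T)) (nhds (1 / (2 * a + b))) := by
    have h1 : Tendsto (fun t => R - φ t) (nhdsWithin T (Set.Iio T)) (nhds 0) := by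
      have := (tendsto_const_nhds (x := R) (f := nhdsWithin T (Set.Iio T))).sub hlim
      simpa using this
    have h2 : Tendsto (fun t => Real.exp (R - φ t)) (nhdsWithin T (Set.Iio T)) (nhds 1) := by
      have := (Real.continuous_exp.tendsto 0).comp h1; rw [Real.exp_zero] at this; exact this
    have h3 : Tendsto (fun t => Real.exp (2 * (R - φ t))) (nhdsWithin T (Set.Iio T)) (nhds 1) := by
      have h1' : Tendsto (fun t => 2 * (R - φ t)) (nhdsWithin T (Set.Iio T)) (nhds 0) := by
        simpa using h1.const_mul 2
      have := (Real.continuous_exp.tendsto 0).comp h1'; rw [Real.exp_zero] at this; exact this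
    have h4 : Tendsto (fun t => a * (Real.exp (2 * (R - φ t)) + 1) + b * Real.exp (R - φ t))
        (nhdsWithin T (Set.Iio T)) (nhds (2 * a + b)) := by
      have := ((h3.add_const 1).const_mul a).add (h2.const_mul b)
      convert this using 2
      ring
    have hden : (2 * a + b) ≠ 0 := by positivity
    exact h2.div h4 hden
  have hrhs : Tendsto (fun t => Real.exp (a * t) * Real.exp R /
      (a * (Real.exp (2 * R) + 1) + b * Real.exp R))
      (nhdsWithin T (Set.Iio T)) (nhds (Real.exp (a * T) * Real.exp R /
      (a * (Real.exp (2 * R) + 1) + b * Real.exp R))) := by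
    apply Tendsto.div_const
    apply Tendsto.mul_const
    exact ((Real.continuous_exp.comp (continuous_const.mul continuous_id)).tendsto T).mono_left
      nhdsWithin_le_nhds
  have heq : (1 : ℝ) / (2 * a + b) = Real.exp (a * T) * Real.exp R /
      (a * (Real.exp (2 * R) + 1) + b * Real.exp R) := by
    refine tendsto_nhds_unique (hlhs.congr' ?_) hrhs
    filter_upwards [hmem] with t ht
    exact hmain t ht
  -- solve for T
  have h2ab : 2 * a + b = 2 * n := by rw [ha, hb]; ring
  have hD2 : (0:ℝ) < a * (Real.exp (2 * R) + 1) + b * Real.exp R := hDpos R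
  have hexpT : Real.exp (a * T) =
      (a * (Real.exp (2 * R) + 1) + b * Real.exp R) / (2 * n * Real.exp R) := by
    have h2n : (0:ℝ) < 2 * n := by linarith
    rw [h2ab] at heq
    have hER : (0:ℝ) < Real.exp R := Real.exp_pos R
    field_simp at heq ⊢
    nlinarith [heq, Real.exp_pos (a*T)]
  have := congrArg Real.log hexpT
  rw [Real.log_exp] at this
  rw [← this]
  field_simp
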